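/- Let V be a finite Boolean ring. Then every element a of V has a unique decomposition into logical primes: there exists a unique finite set S of logical primes of V such that a equals the product of the elements of S (the empty product being 1). -/

import Mathlib

/-- An element `p` of a Boolean ring is a *logical prime* if `p ≠ 1` and
`p * a = 0` implies `a = 0` or `a = 1 + p`. -/
def IsLogicalPrime {V : Type*} [CommRing V] (p : V) : Prop :=
  p ≠ 1 ∧ ∀ a : V, p * a = 0 → a = 0 ∨ a = 1 + p

section Aux

variable {V : Type*} [CommRing V]

lemma BR.add_self (hB : ∀ x : V, x * x = x) (x : V) : x + x = 0 := by
  linear_combination hB (x + x) - 4 * hB x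

lemma BR.add_eq_zero (hB : ∀ x : V, x * x = x) {x y : V} (h : x + y = 0) : x = y := by
  linear_combination h - BR.add_self hB y

/-- `p` is a logical prime iff `1 + p` is an atom. -/
lemma BR.prime_iff_atom (hB : ∀ x : V, x * x = x) (p : V) :
    IsLogicalPrime p ↔ ((1 + p) ≠ 0 ∧ ∀ x : V, x * (1 + p) = x → x = 0 ∨ x = 1 + p) := by
  constructor
  · rintro ⟨hp1, hp⟩
    refine ⟨fun h => hp1 (BR.add_eq_zero hB (by linear_combination h)).symm, fun x hx => ?_⟩
    exact hp x (by linear_combination hx)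
  · rintro ⟨hne, h⟩
    refine ⟨fun h1 => hne (by rw [h1]; exact BR.add_self hB 1), fun x hx => ?_⟩
    exact h x (by linear_combination hx)

lemma BR.mul_prod_eq_self (e : V) (T : Finset V) (h : ∀ q ∈ T, e * q = e) :
    e * ∏ q ∈ T, q = e := by
  classical
  induction T using Finset.induction_on with
  | empty => simp
  | insert s hs hq ih =>
    rw [Finset.prod_insert hq]
    have h1 : e * s = e := h s (Finset.mem_insert_self s hs)
    have h2 : e * ∏ q ∈ hs, q = e := ih (fun q hqs => h q (Finset.mem_insert_of_mem hqs))
    calc e * (s * ∏ q ∈ hs, q) = (e * s) * ∏ q ∈ hs, q := by ring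
    _ = e * ∏ q ∈ hs, q := by rw [h1]
    _ = e := h2

/-- In a finite Boolean ring, below every nonzero element there is an atom. -/
lemma BR.exists_atom [Fintype V] (hB : ∀ x : V, x * x = x) :
    ∀ b : V, b ≠ 0 → ∃ e : V, e ≠ 0 ∧ e * b = e ∧ ∀ x : V, x * e = x → x = 0 ∨ x = e := by
  classical
  suffices H : ∀ n : ℕ, ∀ b : V,
      (Finset.univ.filter (fun x => x * b = x)).card ≤ n → b ≠ 0 →
      ∃ e : V, e ≠ 0 ∧ e * b = e ∧ ∀ x : V, x * e = x → x = 0 ∨ x = e by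
    intro b hb
    exact H _ b le_rfl hb
  intro n
  induction n with
  | zero =>
    intro b hcard hb
    exfalso
    have : b ∈ Finset.univ.filter (fun x => x * b = x) := by
      simp [hB b]
    have := Finset.card_pos.mpr ⟨b, this⟩
    omega
  | succ n ih =>
    intro b hcard hb
    by_cases hmin : ∀ x : V, x * b = x → x = 0 ∨ x = b
    · exact ⟨b, hb, hB b, hmin⟩
    · push_neg at hmin
      obtain ⟨x, hxb, hx0, hxne⟩ := hmin
      have hsub : (Finset.univ.filter (fun y => y * x = y)) ⊂
          (Finset.univ.filter (fun y => y * b = y)) := by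
        constructor
        · intro y hy
          simp only [Finset.mem_filter, Finset.mem_univ, true_and] at hy ⊢
          calc y * b = (y * x) * b := by rw [hy]
          _ = y * (x * b) := by ring
          _ = y * x := by rw [hxb]
          _ = y := hy
        · intro hcon
          have hbmem : b ∈ Finset.univ.filter (fun y => y * b = y) := by simp [hB b]
          have := hcon hbmem
          simp only [Finset.mem_filter, Finset.mem_univ, true_and] at this
          -- this : b * x = b, combined with x * b = x gives x = b
          exact hxne (by linear_combination this - hxb)
      have hlt : (Finset.univ.filter (fun y => y * x = y)).card ≤ n := by
        have := Finset.card_lt_card hsub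
        omega
      obtain ⟨e, he0, hex, hemin⟩ := ih x hlt hx0
      refine ⟨e, he0, ?_, hemin⟩
      calc e * b = (e * x) * b := by rw [hex]
      _ = e * (x * b) := by ring
      _ = e * x := by rw [hxb]
      _ = e := hex

end Aux

/-- In a finite Boolean ring every element has a unique decomposition
as a product of a finite set of logical primes (the empty product being `1`). -/
theorem unique_prime_decomposition (V : Type*) [CommRing V] [Fintype V]
    (hB : ∀ x : V, x * x = x) (a : V) :
    ∃! S : Finset V, (∀ p ∈ S, IsLogicalPrime p) ∧ a = ∏ p ∈ S, p := by
  classical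
  set S : Finset V := Finset.univ.filter (fun p => IsLogicalPrime p ∧ a * p = a) with hS
  have memS : ∀ p : V, p ∈ S ↔ IsLogicalPrime p ∧ a * p = a := by
    intro p; simp [hS]
  -- the product of a set of logical primes absorbs each member
  have absorb : ∀ (T : Finset V) (p : V), p ∈ T → (∏ q ∈ T, q) * p = ∏ q ∈ T, q := by
    intro T p hp
    have h1 : ∏ q ∈ T, q = p * ∏ q ∈ T.erase p, q :=
      (Finset.mul_prod_erase T (fun q => q) hp).symm
    calc (∏ q ∈ T, q) * p = (p * p) * ∏ q ∈ T.erase p, q := by rw [h1]; ring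
    _ = p * ∏ q ∈ T.erase p, q := by rw [hB p]
    _ = ∏ q ∈ T, q := h1.symm
  -- existence: a equals the product over S
  have hprod : a = ∏ p ∈ S, p := by
    set b := ∏ p ∈ S, p with hb
    have hab : a * b = a :=
      BR.mul_prod_eq_self a S (fun q hq => ((memS q).1 hq).2)
    by_contra hne
    have hc : b + a ≠ 0 := fun h => hne ((BR.add_eq_zero hB h).symm)
    obtain ⟨e, he0, hec, hemin⟩ := BR.exists_atom hB (b + a) hc
    -- e * a is 0 or e
    have hea : e * a = 0 ∨ e * a = e := by
      have : (e * a) * e = e * a := by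
        calc (e * a) * e = (e * e) * a := by ring
        _ = e * a := by rw [hB e]
      exact hemin (e * a) this
    rcases hea with hea | hea
    · -- e annihilates a, so 1+e is a logical prime containing a, hence in S
      have hprime : IsLogicalPrime (1 + e) := by
        rw [BR.prime_iff_atom hB]
        have h11 : (1 : V) + (1 + (1 + e)) = 1 + e := by
          linear_combination BR.add_self hB 1
        have heq : (1 : V) + (1 + e) = e := by linear_combination BR.add_self hB 1
        rw [heq]
        exact ⟨he0, hemin⟩
      have haP : a * (1 + e) = a := by linear_combination hea
      have hpS : (1 + e) ∈ S := (memS (1 + e)).2 ⟨hprime, haP⟩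
      have hbP : b * (1 + e) = b := absorb S (1 + e) hpS
      -- so b * e = 0
      have hbe : b * e = 0 := by linear_combination hbP
      -- but e ≤ b + a and e * a = 0 forces e * b = e
      have heb : e * b = e := by linear_combination hec - hea
      exact he0 (by linear_combination hbe - heb)
    · -- e ≤ a ≤ b, so e * b = e, but also e*(b+a) = e gives e * b = 0
      have heb : e * b = e := by
        calc e * b = (e * a) * b := by rw [hea]
        _ = e * (a * b) := by ring
        _ = e * a := by rw [hab]
        _ = e := hea
      have heb0 : e * b = 0 := by linear_combination hec - hea
      exact he0 (by linear_combination heb0 - heb)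
  refine ⟨S, ⟨fun p hp => ((memS p).1 hp).1, hprod⟩, ?_⟩
  rintro T ⟨hTp, hTprod⟩
  ext p
  rw [memS]
  constructor
  · intro hpT
    refine ⟨hTp p hpT, ?_⟩
    have := absorb T p hpT
    rw [← hTprod] at this
    exact this
  · rintro ⟨hp, hap⟩
    -- e := 1 + p is an atom
    obtain ⟨he0, hemin⟩ := (BR.prime_iff_atom hB p).1 hp
    set e := 1 + p with he
    have hea : e * a = 0 := by
      calc e * a = a + p * a := by rw [he]; ring
      _ = a + a := by rw [mul_comm, hap]
      _ = 0 := BR.add_self hB a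
    have heT : e * ∏ q ∈ T, q = 0 := by rw [← hTprod]; exact hea
    have hq : ∃ q ∈ T, e * q ≠ e := by
      by_contra hcon
      push_neg at hcon
      exact he0 (by rw [← BR.mul_prod_eq_self e T hcon, heT])
    obtain ⟨q, hqT, hqe⟩ := hq
    have heq0 : e * q = 0 := by
      have : (e * q) * e = e * q := by
        calc (e * q) * e = (e * e) * q := by ring
        _ = e * q := by rw [hB e]
      rcases hemin (e * q) this with h | h
      · exact h
      · exact absurd h hqe
    -- 1 + q is an atom and e ≤ 1 + q, so e = 1 + q, hence p = q
    obtain ⟨hf0, hfmin⟩ := (BR.prime_iff_atom hB q).1 (hTp q hqT)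
    have hef : e * (1 + q) = e := by linear_combination heq0
    rcases hfmin e hef with h | h
    · exact absurd h he0
    · have : p = q := by rw [he] at h; linear_combination h
      rw [this]; exact hqT
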